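/- Let θ ∈ {0,1/2}, and let ε be a complex number satisfying either Re ε > 0 and ε⁻¹ ∉ ℤ, or Re ε = 0 and Im ε > 0. Define for m,n ∈ ℤ and r,s ∈ ℤ+θ: f(m,n) = −n(1+εn)/(1+ε(m+n)), g(m,r) = −(m/2+r)(1+2εr)/(1+2ε(m+r)), h(r,m) = −m(1+εm)/(1+2ε(m+r)), d(r,s) = (1+2εs)/(1+ε(r+s)), φ(m,n) = (1/24)(m³−m+(ε−ε⁻¹)m²)·δ_{m+n,0}. Suppose ψ: ℤ×(ℤ+θ) → ℂ, ρ: (ℤ+θ)×ℤ → ℂ, σ: (ℤ+θ)×(ℤ+θ) → ℂ satisfy, for all m,n ∈ ℤ and r,s,t ∈ ℤ+θ: σ(r,s) + σ(s,r) = (1/12)(4r²−1)δ_{r+s,0}; ψ(m,r) = ρ(r,m); (m−n)ψ(m+n,r) = g(n,r)ψ(m,n+r) − g(m,r)ψ(n,m+r); (m/2−r)ρ(m+r,n) = h(r,n)ψ(m,n+r) − f(m,n)ρ(r,m+n); (m/2−r)σ(m+r,s) = d(r,s)φ(m,r+s) − g(m,s)σ(r,m+s); 2φ(r+s,m) = h(s,m)σ(r,m+s)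 + h(r,m)σ(s,m+r); 2ψ(r+s,t) = d(s,t)ρ(r,s+t) + d(r,t)ρ(s,r+t). Then necessarily ψ(m,r) = 0, ρ(r,m) = 0, and σ(r,s) = (1/24)(4r²−1+2(ε−ε⁻¹)r)·δ_{r+s,0} for all m ∈ ℤ and r,s ∈ ℤ+θ. -/

import Mathlib

/-- membership in ℤ + θ -/
def InZT (θ x : ℂ) : Prop := ∃ k : ℤ, x = (k : ℂ) + θ

/-- f(m,n) = −n(1+εn)/(1+ε(m+n)) -/
noncomputable def vf (ε m n : ℂ) : ℂ := -n * (1 + ε * n) / (1 + ε * (m + n))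

/-- g(m,r) = −(m/2+r)(1+2εr)/(1+2ε(m+r)) -/
noncomputable def vg (ε m r : ℂ) : ℂ :=
  -(m / 2 + r) * (1 + 2 * ε * r) / (1 + 2 * ε * (m + r))

/-- h(r,m) = −m(1+εm)/(1+2ε(m+r)) -/
noncomputable def vh (ε r m : ℂ) : ℂ := -m * (1 + ε * m) / (1 + 2 * ε * (m + r))

/-- d(r,s) = (1+2εs)/(1+ε(r+s)) -/
noncomputable def vd (ε r s : ℂ) : ℂ := (1 + 2 * ε * s) / (1 + ε * (r + s))

/-- φ(m,n) = (1/24)(m³−m+(ε−ε⁻¹)m²)δ_{m+n,0} -/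
noncomputable def vphi (ε m n : ℂ) : ℂ :=
  (1 / 24) * (m ^ 3 - m + (ε - ε⁻¹) * m ^ 2) * (if m + n = 0 then 1 else 0)

lemma eps_ne {ε : ℂ} (hε : (0 < ε.re ∧ ∀ k : ℤ, ε⁻¹ ≠ (k : ℂ)) ∨ (ε.re = 0 ∧ 0 < ε.im)) :
    ε ≠ 0 := by
  rcases hε with ⟨h, _⟩ | ⟨_, h⟩ <;> intro h0 <;> rw [h0] at h <;> simp at h

lemma one_add_int_ne {ε : ℂ} (hε : (0 < ε.re ∧ ∀ k : ℤ, ε⁻¹ ≠ (k : ℂ)) ∨ (ε.re = 0 ∧ 0 < ε.im)) :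
    ∀ j : ℤ, (1:ℂ) + ε * j ≠ 0 := by
  intro j h
  rcases hε with ⟨hre, hinv⟩ | ⟨hre, him⟩
  · have hε0 : ε ≠ 0 := by intro h0; rw [h0] at hre; simp at hre
    have hmul : ε * (-(j:ℂ)) = 1 := by linear_combination -h
    have : ε⁻¹ = ((-j : ℤ) : ℂ) := by push_cast; exact inv_eq_of_mul_eq_one_right hmul
    exact hinv (-j) this
  · have := congrArg Complex.re h
    simp [Complex.add_re, Complex.mul_re, hre] at this

section Main

variable (θ ε : ℂ) (hθ : θ = 0 ∨ θ = 1 / 2)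
variable (hε : (0 < ε.re ∧ ∀ k : ℤ, ε⁻¹ ≠ (k : ℂ)) ∨ (ε.re = 0 ∧ 0 < ε.im))

/-- existence of half-integer witness -/
lemma two_mem (hθ : θ = 0 ∨ θ = 1 / 2) : ∀ x : ℂ, InZT θ x → ∃ j : ℤ, (j : ℂ) = 2 * x := by
  rintro x ⟨k, rfl⟩
  rcases hθ with h | h
  · exact ⟨2 * k, by push_cast [h]; ring⟩
  · exact ⟨2 * k + 1, by push_cast [h]; ring⟩

lemma mem_add (n : ℤ) : ∀ x : ℂ, InZT θ x → InZT θ ((n : ℂ) + x) := by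
  rintro x ⟨k, rfl⟩; exact ⟨n + k, by push_cast; ring⟩

lemma mem_neg_one_sub (hθ : θ = 0 ∨ θ = 1 / 2) :
    ∀ x : ℂ, InZT θ x → InZT θ (-1 - x) := by
  rintro x ⟨k, rfl⟩
  rcases hθ with h | h
  · exact ⟨-1 - k, by push_cast [h]; ring⟩
  · exact ⟨-2 - k, by push_cast [h]; ring⟩

end Main


/-- uniqueness part of Theorem 4.2: if ψ, ρ, σ satisfy equations
(4.7)–(4.13) of the paper with f, g, h, d given by (3.4)–(3.5) and φ given by
(4.14), then ψ = ρ = 0 and σ(r,s) = (1/24)(4r²−1+2(ε−ε⁻¹)r)δ_{r+s,0}. -/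
theorem central_extension_uniqueness (θ ε : ℂ) (hθ : θ = 0 ∨ θ = 1 / 2)
    (hε : (0 < ε.re ∧ ∀ k : ℤ, ε⁻¹ ≠ (k : ℂ)) ∨ (ε.re = 0 ∧ 0 < ε.im))
    (ψ ρ σ : ℂ → ℂ → ℂ)
    (hσsym : ∀ r s : ℂ, InZT θ r → InZT θ s →
      σ r s + σ s r = (1 / 12) * (4 * r ^ 2 - 1) * (if r + s = 0 then 1 else 0))
    (hpr : ∀ (m : ℤ) (r : ℂ), InZT θ r → ψ m r = ρ r m)
    (h9 : ∀ (m n : ℤ) (r : ℂ), InZT θ r →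
      ((m : ℂ) - (n : ℂ)) * ψ ((m : ℂ) + (n : ℂ)) r
        = vg ε n r * ψ m ((n : ℂ) + r) - vg ε m r * ψ n ((m : ℂ) + r))
    (h10 : ∀ (m n : ℤ) (r : ℂ), InZT θ r →
      ((m : ℂ) / 2 - r) * ρ ((m : ℂ) + r) n
        = vh ε r n * ψ m ((n : ℂ) + r) - vf ε m n * ρ r ((m : ℂ) + (n : ℂ)))
    (h11 : ∀ (m : ℤ) (r s : ℂ), InZT θ r → InZT θ s →
      ((m : ℂ) / 2 - r) * σ ((m : ℂ) + r) s
        = vd ε r s * vphi ε m (r + s) - vg ε m s * σ r ((m : ℂ) + s))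
    (h12 : ∀ (m : ℤ) (r s : ℂ), InZT θ r → InZT θ s →
      2 * vphi ε (r + s) m
        = vh ε s m * σ r ((m : ℂ) + s) + vh ε r m * σ s ((m : ℂ) + r))
    (h13 : ∀ r s t : ℂ, InZT θ r → InZT θ s → InZT θ t →
      2 * ψ (r + s) t = vd ε s t * ρ r (s + t) + vd ε r t * ρ s (r + t)) :
    ∀ (m : ℤ) (r s : ℂ), InZT θ r → InZT θ s →
      ψ m r = 0 ∧ ρ r m = 0 ∧
      σ r s = (1 / 24) * (4 * r ^ 2 - 1 + 2 * (ε - ε⁻¹) * r) *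
        (if r + s = 0 then 1 else 0) := by
  have hε0 : ε ≠ 0 := eps_ne hε
  have hne : ∀ j : ℤ, (1:ℂ) + ε * j ≠ 0 := one_add_int_ne hε
  have hE4 : ε * ε⁻¹ = 1 := mul_inv_cancel₀ hε0
  -- ψ 0 x = 0 for x ≠ 0
  have hψ0 : ∀ x : ℂ, InZT θ x → x ≠ 0 → ψ 0 x = 0 := by
    intro x hx hx0
    have e := h10 0 0 x hx
    have hvh0 : vh ε x 0 = 0 := by simp [vh]
    have hvf0 : vf ε 0 0 = 0 := by simp [vf]
    push_cast at e
    rw [hvh0, hvf0] at e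
    simp only [zero_mul, zero_add, sub_zero, zero_sub] at e
    have hρ : ρ x 0 = 0 := by
      rcases mul_eq_zero.mp e with h | h
      · exact absurd (by linear_combination -h) hx0
      · exact h
    have := hpr 0 x hx
    push_cast at this
    rw [this, hρ]
  -- full vanishing of ψ
  have hψ : ∀ (m : ℤ) (x : ℂ), InZT θ x → ψ (m : ℂ) x = 0 := by
    intro m x hx
    by_cases hmx : (m : ℂ) + x = 0
    · -- diagonal case: θ = 0, x = -m
      obtain ⟨k, hk⟩ := hx
      have hθ0 : θ = 0 := by
        rcases hθ with h | h
        · exact h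
        · exfalso
          rw [hk, h] at hmx
          have : ((2*m + 2*k + 1 : ℤ) : ℂ) = 0 := by push_cast; linear_combination 2*hmx
          have := (Int.cast_eq_zero (α := ℂ)).mp this
          omega
      subst hθ0
      have hxm : x = -(m : ℂ) := by linear_combination hmx
      subst hxm
      have m0 : InZT 0 (0 : ℂ) := ⟨0, by simp⟩
      have mm : ∀ n : ℤ, InZT 0 ((n : ℂ)) := fun n => ⟨n, by simp⟩
      -- ψ 0 0 = 0
      have ψ00 : ψ 0 0 = 0 := by
        have n2e : (1:ℂ) - 2 * ε ≠ 0 := fun h => hne (-2) (by push_cast; linear_combination h)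
        have e := h9 1 0 (-1) ⟨-1, by simp⟩
        have hvg1 : vg ε 0 (-1) = 1 := by
          rw [vg, show -((0:ℂ)/2 + -1) * (1 + 2*ε*(-1)) = 1 - 2*ε from by ring,
            show (1:ℂ) + 2*ε*(0 + -1) = 1 - 2*ε from by ring]
          exact div_self n2e
        have hvg2 : vg ε 1 (-1) = (1/2) * (1 - 2*ε) := by
          rw [vg, show (1:ℂ) + 2*ε*(1 + -1) = 1 from by ring, div_one]; ring
        push_cast at e
        rw [hvg1, hvg2] at e
        rw [show (1:ℂ) + 0 = 1 from by ring, show (0:ℂ) + -1 = -1 from by ring,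
          show (1:ℂ) + -1 = 0 from by ring] at e
        have h0 : (1/2) * (1 - 2*ε) * ψ 0 0 = 0 := by linear_combination e
        rcases mul_eq_zero.mp h0 with h | h
        · exact absurd (by linear_combination 2*h) n2e
        · exact h
      -- diagonal recursion
      have nm1 : (1:ℂ) - ε * m ≠ 0 := fun h => hne (-m) (by push_cast; linear_combination h)
      have nm2 : (1:ℂ) + ε * m ≠ 0 := fun h => hne m (by push_cast; linear_combination h)
      have ρ00 : ρ 0 0 = 0 := by
        have := hpr 0 0 m0; push_cast at this; rw [← this]; exact ψ00
      have hρ1 : ρ (m:ℂ) (-(m:ℂ)) = ψ (-(m:ℂ)) (m:ℂ) := by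
        have := hpr (-m) (m:ℂ) (mm m); push_cast at this; rw [this]
      have hρ2 : ρ (-(m:ℂ)) (m:ℂ) = ψ (m:ℂ) (-(m:ℂ)) := by
        have := hpr m (-(m:ℂ)) ⟨-m, by push_cast; ring⟩; rw [this]
      have e1 := h13 (m:ℂ) 0 (-(m:ℂ)) (mm m) m0 ⟨-m, by push_cast; ring⟩
      have e2 := h13 (-(m:ℂ)) 0 (m:ℂ) ⟨-m, by push_cast; ring⟩ m0 (mm m)
      rw [add_zero, zero_add, show (m:ℂ) + -(m:ℂ) = 0 from by ring, hρ1, ρ00, mul_zero,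
        add_zero] at e1
      rw [add_zero, zero_add, show -(m:ℂ) + (m:ℂ) = 0 from by ring, hρ2, ρ00, mul_zero,
        add_zero] at e2
      have hvd1 : vd ε 0 (-(m:ℂ)) = (1 - 2*ε*m) / (1 - ε*m) := by
        rw [vd]; ring_nf
      have hvd2 : vd ε 0 (m:ℂ) = (1 + 2*ε*m) / (1 + ε*m) := by
        rw [vd]; ring_nf
      rw [hvd1] at e1
      rw [hvd2] at e2
      rw [div_mul_eq_mul_div, eq_div_iff nm1] at e1
      rw [div_mul_eq_mul_div, eq_div_iff nm2] at e2
      have key3 : (3:ℂ) * ψ (m:ℂ) (-(m:ℂ)) = 0 := by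
        linear_combination (2*(1 + ε*(m:ℂ))) * e1 + (1 - 2*ε*(m:ℂ)) * e2
      have := mul_eq_zero.mp key3
      rcases this with h | h
      · norm_num at h
      · exact h
    · -- off-diagonal
      obtain ⟨j, hj⟩ := two_mem θ hθ x hx
      have n5 : (1:ℂ) + 2*ε*x ≠ 0 := fun h => hne j (by linear_combination h + ε*hj)
      have e := h9 m 0 x hx
      have hvg0 : vg ε 0 x = -x := by
        rw [vg, show (1:ℂ) + 2*ε*(0+x) = 1 + 2*ε*x from by ring, div_eq_iff n5]; ring
      push_cast at e
      rw [hvg0, add_zero, zero_add, sub_zero] at e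
      rw [hψ0 ((m:ℂ) + x) (mem_add θ m x hx) hmx, mul_zero, sub_zero] at e
      have h0 : ((m:ℂ) + x) * ψ (m:ℂ) x = 0 := by linear_combination e
      rcases mul_eq_zero.mp h0 with h | h
      · exact absurd h hmx
      · exact h
  intro m r s hr hs
  refine ⟨hψ m r hr, by rw [← hpr m r hr]; exact hψ m r hr, ?_⟩
  by_cases hrs : r + s = 0
  · -- diagonal σ
    rw [if_pos hrs]
    have hs' : s = -r := by linear_combination hrs
    subst hs'
    have n1 : (1:ℂ) - ε ≠ 0 := fun h => hne (-1) (by push_cast; linear_combination h)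
    have n1' : (1:ℂ) + ε ≠ 0 := fun h => hne 1 (by push_cast; linear_combination h)
    by_cases hr2 : r = 1/2
    · -- special case r = 1/2
      subst hr2
      have hθ2 : θ = 1/2 := by
        rcases hθ with h | h
        · exfalso
          obtain ⟨k, hk⟩ := hr
          rw [h, add_zero] at hk
          have : ((2*k : ℤ) : ℂ) = 1 := by push_cast; linear_combination -2*hk
          have := (Int.cast_injective (α := ℂ)) (by push_cast at this ⊢; linear_combination this : ((2*k : ℤ):ℂ) = ((1:ℤ):ℂ))
          omega
        · exact h
      have n3 : (1:ℂ) - 3*ε ≠ 0 := fun h => hne (-3) (by push_cast; linear_combination h)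
      have msmem : InZT θ (-3/2 : ℂ) := ⟨-2, by rw [hθ2]; norm_num⟩
      have e := h11 1 (1/2) (-3/2) hr msmem
      have hvd : vd ε (1/2) (-3/2) = (1-3*ε)/(1-ε) := by rw [vd]; ring_nf
      have hvphi : vphi ε 1 ((1:ℂ)/2 + -3/2) = (ε-ε⁻¹)/24 := by
        rw [vphi, if_pos (show (1:ℂ) + ((1:ℂ)/2 + -3/2) = 0 from by norm_num)]; ring
      have hvg : vg ε 1 (-3/2) = (1-3*ε)/(1-ε) := by rw [vg]; ring_nf
      push_cast at e
      rw [hvd, hvphi, hvg] at e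
      rw [show (1:ℂ) + -3/2 = -(1/2) from by norm_num] at e
      field_simp at e
      have hval : (ε*(1-ε)*(1-3*ε)) * ((ε-ε⁻¹) - 24 * σ (1/2) (-(1/2))) = 0 := by
        linear_combination (-(1-ε)/2) * e - (1-ε)*(1-3*ε)*hE4
      have h0 := (mul_eq_zero.mp hval).resolve_left
        (mul_ne_zero (mul_ne_zero hε0 n1) n3)
      linear_combination (-(1:ℂ)/24) * h0
    · -- generic case
      obtain ⟨j, hj⟩ := two_mem θ hθ r hr
      have n2 : (1:ℂ) - 2*ε*r ≠ 0 := fun h => hne (-j) (by push_cast; linear_combination h - ε*hj)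
      have n3 : (1:ℂ) + 2*ε*(1+r) ≠ 0 := fun h => hne (j+2) (by push_cast; linear_combination h + ε*hj)
      have n4 : (1:ℂ) - 4*ε*r*(1+r) ≠ 0 := fun h =>
        hne (-(j^2+2*j)) (by push_cast; linear_combination h - (ε*((j:ℂ)+2*r)+2*ε)*hj)
      have nhalf : (1:ℂ)/2 - r ≠ 0 := fun h => hr2 (by linear_combination -h)
      have mem1r : InZT θ (1+r) := by
        obtain ⟨k, hk⟩ := hr; exact ⟨k+1, by rw [hk]; push_cast; ring⟩
      have memm1r : InZT θ (-1-r) := mem_neg_one_sub θ hθ r hr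
      -- equation E1 from (4.11) with m = 1
      have e1 := h11 1 r (-1-r) hr memm1r
      have hv1 : vd ε r (-1-r) = (1-2*ε*(1+r))/(1-ε) := by rw [vd]; ring_nf
      have hv2 : vphi ε 1 (r + (-1-r)) = (ε-ε⁻¹)/24 := by
        rw [vphi, if_pos (show (1:ℂ) + (r + (-1-r)) = 0 from by ring)]; ring
      have hv3 : vg ε 1 (-1-r) = ((1/2+r)*(1-2*ε*(1+r)))/(1-2*ε*r) := by rw [vg]; ring_nf
      push_cast at e1
      rw [hv1, hv2, hv3, show (1:ℂ) + (-1-r) = -r from by ring] at e1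
      field_simp at e1
      have e1' : (1-2*r)*σ (1+r) (-1-r)*ε*(1-ε)*24*(1-2*r*ε) = (1-2*(1+r)*ε)*(2*(ε^2-1)*(1-2*r*ε) - ε*(1-ε)*24*(1+2*r)*σ r (-r)) := by
        have hP : (1-2*r*ε) ≠ 0 := by intro h; apply n2; linear_combination h
        have hinv : (1-2*r*ε)*(1-2*r*ε)⁻¹ = 1 := mul_inv_cancel₀ hP
        linear_combination (1-2*r*ε)*e1 - (1-2*(1+r)*ε)*(ε*(1-ε)*24*(1+2*r))*σ r (-r)*hinv
      -- equation E2 from (4.12) with m = 1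
      have e2 := h12 1 r (-1-r) hr memm1r
      have hv4 : vphi ε (r + (-1-r)) 1 = (ε-ε⁻¹)/24 := by
        rw [vphi, if_pos (show (r + (-1-r)) + 1 = 0 from by ring)]; ring
      have hv5 : vh ε (-1-r) 1 = (-(1+ε))/(1-2*ε*r) := by rw [vh]; ring_nf
      have hv6 : vh ε r 1 = (-(1+ε))/(1+2*ε*(1+r)) := by rw [vh]; ring_nf
      push_cast at e2
      rw [hv4, hv5, hv6, show (1:ℂ) + (-1-r) = -r from by ring] at e2
      field_simp at e2
      -- equation E3 from (4.7)
      have e3 := hσsym (1+r) (-1-r) mem1r memm1r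
      rw [if_pos (show (1+r) + (-1-r) = 0 from by ring), mul_one] at e3
      have key : (2304*ε^2*(1-ε)*(1+ε)*(1-2*ε*r)*(1-4*ε*r*(1+r)))
          * (σ r (-r) - (1/24)*(4*r^2-1+2*(ε-ε⁻¹)*r)) = 0 := by
        linear_combination (48*ε*(1+ε)*(1-2*ε*r)) * e1'
          + (48*ε*(1-2*r)*(1-ε)*(1-2*ε*r)) * e2
          - (48*ε*(1+ε)*(1-2*ε*r)) * (24*ε*(1-2*r)*(1-ε)*(1-2*ε*r)) * e3
          + (192*ε*(1-ε)*(1+ε)*(1-2*ε*r)*(1-4*ε*r*(1+r))*r) * hE4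
      have hnz : (2304:ℂ)*ε^2*(1-ε)*(1+ε)*(1-2*ε*r)*(1-4*ε*r*(1+r)) ≠ 0 :=
        mul_ne_zero (mul_ne_zero (mul_ne_zero (mul_ne_zero (mul_ne_zero
          (by norm_num) (pow_ne_zero 2 hε0)) n1) n1') n2) n4
      have h0 := (mul_eq_zero.mp key).resolve_left hnz
      linear_combination h0
  · -- off-diagonal σ
    rw [if_neg hrs, mul_zero]
    obtain ⟨js, hjs⟩ := two_mem θ hθ s hs
    have n5 : (1:ℂ) + 2*ε*s ≠ 0 := fun h => hne js (by linear_combination h + ε*hjs)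
    have e := h11 0 r s hr hs
    have hvphi0 : vphi ε 0 (r + s) = 0 := by rw [vphi]; norm_num
    have hvg0 : vg ε 0 s = -s := by
      rw [vg, show (1:ℂ) + 2*ε*(0+s) = 1 + 2*ε*s from by ring, div_eq_iff n5]; ring
    push_cast at e
    rw [hvphi0, hvg0] at e
    simp only [zero_add, mul_zero] at e
    have h0 : (r + s) * σ r s = 0 := by linear_combination -e
    rcases mul_eq_zero.mp h0 with h | h
    · exact absurd h hrs
    · exact h
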